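/- arXiv:1306.2059 — 2 statements merged into one kernel-verified Lean document; each statement's English description precedes it below -/
import Mathlib

section
/- Let M be an N×N complex matrix whose eigenvalues λ_1,...,λ_N satisfy λ_j = 0 if and only if j = 1, and let Π_M = λ_2⋯λ_N. Let v_1 span the kernel of M and let v_1* be the unique vector with M*v_1* = 0 and ⟨v_1, v_1*⟩ = 1. Then for every index i, det(M^{{i}})/Π_M = (v_1)_i · conjugate((v_1*)_i). -/
open Matrix BigOperators Polynomial

section helpers
variable {R : Type*} [CommRing R] {n : Type*} [Fintype n] [DecidableEq n]

lemma my_derivative_finset_prod {ι : Type*} [DecidableEq ι] (s : Finset ι) (f : ι → R[X]) :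
    derivative (∏ i ∈ s, f i) = ∑ i ∈ s, (∏ j ∈ s.erase i, f j) * derivative (f i) := by
  induction s using Finset.induction_on with
  | empty => simp
  | @insert a s ha ih =>
    rw [Finset.prod_insert ha, derivative_mul, Finset.sum_insert ha, Finset.erase_insert ha]
    congr 1
    · rw [mul_comm]
    · rw [ih, Finset.mul_sum]
      refine Finset.sum_congr rfl fun i hi => ?_
      rw [Finset.erase_insert_of_ne (ne_of_mem_of_not_mem hi ha).symm,
        Finset.prod_insert (fun h => ha (Finset.mem_of_mem_erase h)), mul_assoc]

variable {n : Type*} [Fintype n] [DecidableEq n]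

lemma my_derivative_det (A : Matrix n n R[X]) :
    derivative A.det = ∑ j, (A.updateCol j (fun i => derivative (A i j))).det := by
  rw [det_apply', map_sum]
  have h1 : ∀ σ : Equiv.Perm n,
      derivative (((Equiv.Perm.sign σ : ℤ) : R[X]) * ∏ i, A (σ i) i)
        = ∑ i, ((Equiv.Perm.sign σ : ℤ) : R[X]) *
            ((∏ j ∈ Finset.univ.erase i, A (σ j) j) * derivative (A (σ i) i)) := by
    intro σ
    rw [derivative_intCast_mul, my_derivative_finset_prod, Finset.mul_sum]
  simp_rw [h1]
  rw [Finset.sum_comm]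
  refine Finset.sum_congr rfl fun i _ => ?_
  rw [det_apply']
  refine Finset.sum_congr rfl fun σ _ => ?_
  congr 1
  have : ∀ j, (A.updateCol i fun r => derivative (A r i)) (σ j) j
      = if j = i then derivative (A (σ j) i) else A (σ j) j := by
    intro j
    rw [updateCol_apply]
  rw [Finset.prod_congr rfl (fun j _ => this j),
    ← Finset.mul_prod_erase (Finset.univ) _ (Finset.mem_univ i), if_pos rfl, mul_comm]
  congr 1
  exact Finset.prod_congr rfl fun j hj => by rw [if_neg (Finset.ne_of_mem_erase hj)]

lemma my_coeff_one_charpoly (M : Matrix n n R) :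
    (Matrix.charpoly M).coeff 1 = (-1 : R) ^ (Fintype.card n - 1) * trace (adjugate M) := by
  have hc : (Matrix.charpoly M).coeff 1 = eval 0 (derivative (Matrix.charpoly M)) := by
    rw [← coeff_zero_eq_eval_zero, coeff_derivative]
    simp
  rw [hc, Matrix.charpoly, my_derivative_det, eval_finset_sum]
  have hterm : ∀ j, eval 0 (((charmatrix M).updateCol j
      (fun i => derivative (charmatrix M i j))).det) = adjugate (-M) j j := by
    intro j
    have hdet := (Polynomial.evalRingHom (0 : R)).map_det
      ((charmatrix M).updateCol j (fun i => derivative (charmatrix M i j)))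
    simp only [coe_evalRingHom, RingHom.mapMatrix_apply] at hdet
    rw [hdet, map_updateCol]
    have h1 : (charmatrix M).map (eval 0) = -M := by
      ext i k
      by_cases h : i = k
      · subst h; simp [charmatrix_apply_eq]
      · simp [charmatrix_apply_ne _ _ _ h]
    have h2 : ((eval 0) ∘ fun i => derivative (charmatrix M i j)) = Pi.single j 1 := by
      funext i
      by_cases h : i = j
      · subst h; simp [charmatrix_apply_eq, Pi.single_eq_same]
      · simp [charmatrix_apply_ne _ _ _ h, Pi.single_eq_of_ne h]
    rw [h1, h2, ← det_transpose, ← updateRow_transpose, ← adjugate_apply,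
      ← adjugate_transpose, transpose_apply]
  rw [Finset.sum_congr rfl fun j _ => hterm j]
  have htr : ∑ j, adjugate (-M) j j = trace (adjugate (-M)) := by
    simp [Matrix.trace, Matrix.diag]
  have : (-M) = (-1 : R) • M := by simp
  rw [htr, this, adjugate_smul, trace_smul, smul_eq_mul]

end helpers

/-- The principal submatrix of `M` obtained by deleting the rows and columns
indexed by the finite set `Δ`. -/
def mdel {V : Type*} [DecidableEq V] (M : Matrix V V ℂ) (Δ : Finset V) :
    Matrix {a // a ∉ Δ} {a // a ∉ Δ} ℂ :=
  M.submatrix Subtype.val Subtype.val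

/-- `Π_M`, the product of the nonzero eigenvalues of `M` (when `0` is an
eigenvalue of `M`): it equals `(-1)^{N-1}` times the coefficient of `λ` in the
characteristic polynomial of `M`. -/
noncomputable def prodNZ {N : ℕ} (M : Matrix (Fin N) (Fin N) ℂ) : ℂ :=
  (-1) ^ (N - 1) * (Matrix.charpoly M).coeff 1

lemma my_rank_submatrix_le {N m : ℕ} (M : Matrix (Fin N) (Fin N) ℂ)
    (f g : Fin m → Fin N) : (M.submatrix f g).rank ≤ M.rank := by
  have h : M.submatrix f g =
      ((1 : Matrix (Fin N) (Fin N) ℂ).submatrix f id) *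
        (M * ((1 : Matrix (Fin N) (Fin N) ℂ).submatrix id g)) := by
    ext i j
    simp [mul_apply, one_apply, Finset.sum_ite_eq, Finset.sum_ite_eq']
  rw [h]
  exact le_trans (rank_mul_le_right _ _) (rank_mul_le_left _ _)

lemma my_ker_span {N : ℕ} (A : Matrix (Fin N) (Fin N) ℂ) (hr : N - 1 ≤ A.rank)
    (v : Fin N → ℂ) (hv : A *ᵥ v = 0) (hvne : v ≠ 0) :
    ∀ u, A *ᵥ u = 0 → ∃ a : ℂ, u = a • v := by
  have hkv : v ∈ LinearMap.ker A.mulVecLin := by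
    simp [LinearMap.mem_ker, mulVecLin_apply, hv]
  have hle : Submodule.span ℂ {v} ≤ LinearMap.ker A.mulVecLin :=
    (Submodule.span_singleton_le_iff_mem _ _).mpr hkv
  have hrn := LinearMap.finrank_range_add_finrank_ker A.mulVecLin
  rw [Module.finrank_fintype_fun_eq_card, Fintype.card_fin] at hrn
  have hNpos : 0 < N := by
    rcases Nat.eq_zero_or_pos N with h | h
    · exfalso; apply hvne; subst h; ext j; exact absurd j.pos (by omega)
    · exact h
  have hfk : Module.finrank ℂ (LinearMap.ker A.mulVecLin) ≤ 1 := by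
    have hd : A.rank = Module.finrank ℂ (LinearMap.range A.mulVecLin) := rfl
    omega
  have heq : Submodule.span ℂ {v} = LinearMap.ker A.mulVecLin :=
    Submodule.eq_of_le_of_finrank_le hle
      (by rw [finrank_span_singleton hvne]; exact hfk)
  intro u hu
  have hmem : u ∈ Submodule.span ℂ {v} := by
    rw [heq]
    simp [LinearMap.mem_ker, mulVecLin_apply, hu]
  obtain ⟨a, ha⟩ := Submodule.mem_span_singleton.mp hmem
  exact ⟨a, ha.symm⟩

/-- Theorem 2: if `0` is an eigenvalue of `M` of algebraic multiplicity exactly one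
(i.e. `λ_j = 0` iff `j = 1`), `v₁` spans the kernel of `M`, and `v₁*` is the vector
with `M^* v₁* = 0` and `⟨v₁, v₁*⟩ = 1`, then
`det(M^{{i}}) / Π_M = (v₁)_i ⋅ conj((v₁*)_i)` for every index `i`. -/
theorem stmt2 {N : ℕ} (M : Matrix (Fin N) (Fin N) ℂ)
    (hmult : (Matrix.charpoly M).rootMultiplicity 0 = 1)
    (v1 v1star : Fin N → ℂ)
    (hv1 : M.mulVec v1 = 0) (hv1ne : v1 ≠ 0)
    (hv1star : Mᴴ.mulVec v1star = 0)
    (hinner : ∑ i, v1 i * star (v1star i) = 1) :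
    ∀ i : Fin N, (mdel M {i}).det / prodNZ M = v1 i * star (v1star i) := by
  intro i
  obtain ⟨n, rfl⟩ : ∃ n, N = n + 1 := ⟨N - 1, (Nat.succ_pred_eq_of_pos i.pos).symm⟩
  set p := Matrix.charpoly M with hp
  have hpne : p ≠ 0 := (Matrix.charpoly_monic M).ne_zero
  have h0 : p.natTrailingDegree = 1 := by
    rw [← Polynomial.rootMultiplicity_eq_natTrailingDegree', hmult]
  have hc0 : p.coeff 0 = 0 :=
    Polynomial.coeff_eq_zero_of_lt_natTrailingDegree (by omega)
  have hc1 : p.coeff 1 ≠ 0 := by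
    have := Polynomial.trailingCoeff_nonzero_iff_nonzero.mpr hpne
    rwa [Polynomial.trailingCoeff, h0] at this
  have hdet : M.det = 0 := by
    rw [det_eq_sign_charpoly_coeff, ← hp, hc0, mul_zero]
  have hcard : Fintype.card (Fin (n + 1)) = n + 1 := Fintype.card_fin _
  have htr : trace (adjugate M) = prodNZ M := by
    rw [prodNZ, ← hp, my_coeff_one_charpoly, hcard]
    rw [← mul_assoc, ← mul_pow]
    simp
  have hPn : prodNZ M ≠ 0 := by
    rw [prodNZ, ← hp]
    exact mul_ne_zero (pow_ne_zero _ (by norm_num)) hc1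
  have htrd : trace (adjugate M) = ∑ j, adjugate M j j := by
    simp [Matrix.trace, Matrix.diag]
  have hsum : ∑ j, adjugate M j j ≠ 0 := by rw [← htrd, htr]; exact hPn
  obtain ⟨i0, -, hi0⟩ := Finset.exists_ne_zero_of_sum_ne_zero hsum
  have hdetB : (M.submatrix i0.succAbove i0.succAbove).det ≠ 0 := by
    intro h
    apply hi0
    rw [adjugate_fin_succ_eq_det_submatrix, h, mul_zero]
  have hrankn : n ≤ M.rank := by
    have h1 : (M.submatrix i0.succAbove i0.succAbove).rank = n := by
      rw [rank_of_isUnit _ ((isUnit_iff_isUnit_det _).mpr (isUnit_iff_ne_zero.mpr hdetB)),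
        Fintype.card_fin]
    exact le_of_eq_of_le h1.symm (my_rank_submatrix_le M _ _)
  have hrM : (n + 1) - 1 ≤ M.rank := by simpa using hrankn
  have hrMT : (n + 1) - 1 ≤ Mᵀ.rank := by rw [rank_transpose]; simpa using hrankn
  set w : Fin (n + 1) → ℂ := fun j => star (v1star j) with hw
  have hwne : w ≠ 0 := by
    intro h
    have hz : v1star = 0 := by
      funext j
      have := congrFun h j
      simpa [hw, star_eq_zero] using this
    rw [hz] at hinner
    simp at hinner
  have hMTw : Mᵀ *ᵥ w = 0 := by
    have h1 := congrArg star hv1star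
    rw [star_mulVec, conjTranspose_conjTranspose] at h1
    rw [mulVec_transpose]
    rw [star_zero] at h1
    exact h1
  have hcol := my_ker_span M hrM v1 hv1 hv1ne
  have hrow := my_ker_span Mᵀ hrMT w hMTw hwne
  have hMadj : M * adjugate M = 0 := by rw [mul_adjugate, hdet, zero_smul]
  have hadjM : adjugate M * M = 0 := by rw [adjugate_mul, hdet, zero_smul]
  have hcol2 : ∀ j, ∃ a : ℂ, (fun k => adjugate M k j) = a • v1 := by
    intro j
    apply hcol
    funext k
    have := congrFun (congrFun hMadj k) j
    simpa [mul_apply, mulVec, dotProduct] using this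
  have hrow2 : ∀ i', ∃ b : ℂ, (fun k => adjugate M i' k) = b • w := by
    intro i'
    apply hrow
    funext k
    have := congrFun (congrFun hadjM i') k
    simpa [mul_apply, mulVec, dotProduct, transpose_apply, mul_comm] using this
  choose a ha using hcol2
  choose b hb using hrow2
  have hab : ∀ i' j, adjugate M i' j = a j * v1 i' := fun i' j => by
    have := congrFun (ha j) i'
    simpa using this
  have hba : ∀ i' j, adjugate M i' j = b i' * w j := fun i' j => by
    have := congrFun (hb i') j
    simpa using this
  obtain ⟨i1, hi1⟩ := Function.ne_iff.mp hv1ne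
  have hi1' : v1 i1 ≠ 0 := hi1
  have hkey : ∀ i' j, adjugate M i' j * v1 i1 = b i1 * w j * v1 i' := by
    intro i' j
    have h2 : a j * v1 i1 = b i1 * w j := by rw [← hab i1 j, hba i1 j]
    calc adjugate M i' j * v1 i1 = (a j * v1 i1) * v1 i' := by rw [hab i' j]; ring
    _ = b i1 * w j * v1 i' := by rw [h2]
  have hsum2 : prodNZ M * v1 i1 = b i1 := by
    calc prodNZ M * v1 i1 = (∑ j, adjugate M j j) * v1 i1 := by rw [← htrd, htr]
    _ = ∑ j, adjugate M j j * v1 i1 := by rw [Finset.sum_mul]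
    _ = ∑ j, b i1 * (v1 j * w j) := by
        refine Finset.sum_congr rfl fun j _ => ?_
        rw [hkey j j]; ring
    _ = b i1 * ∑ j, v1 j * w j := by rw [Finset.mul_sum]
    _ = b i1 := by rw [hw] at *; rw [hinner, mul_one]
  have hdiag : ∀ k, adjugate M k k = prodNZ M * (v1 k * w k) := by
    intro k
    have h1 : adjugate M k k * v1 i1 = prodNZ M * (v1 k * w k) * v1 i1 := by
      rw [hkey k k, ← hsum2]; ring
    exact mul_right_cancel₀ hi1' h1
  have hmdel : (mdel M {i}).det = adjugate M i i := by
    let e : Fin n ≃ {a : Fin (n + 1) // a ∉ ({i} : Finset (Fin (n + 1)))} :=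
      (finSuccAboveEquiv i).trans (Equiv.subtypeEquivRight (fun a => by simp))
    have h1 : ((mdel M {i}).submatrix e e) = M.submatrix i.succAbove i.succAbove := by
      ext k l
      simp [mdel, e, finSuccAboveEquiv]
    rw [← det_submatrix_equiv_self e, h1, adjugate_fin_succ_eq_det_submatrix,
      Even.neg_one_pow ⟨i, rfl⟩, one_mul]
  rw [hmdel, hdiag i, mul_div_cancel_left₀ _ hPn]
end

section
/- Let Q be a Q-matrix on a finite state space such that there is a state accessible from every other state. Then 0 is a simple eigenvalue of Q, every nonzero real eigenvalue of −Q is strictly positive, and the real part of every eigenvalue of −Q is nonnegative. -/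
open Matrix BigOperators

section Aux

variable {V : Type*} [Fintype V] [DecidableEq V]

private lemma qm_sum (Q : Matrix V V ℝ) (hrow : ∀ a, ∑ b, Q a b = 0) (v : V → ℝ) (x : V) :
    Q.mulVec v x = ∑ b, Q x b * (v b - v x) := by
  simp only [Matrix.mulVec, dotProduct, mul_sub]
  rw [Finset.sum_sub_distrib, ← Finset.sum_mul, hrow, zero_mul, sub_zero]

private lemma qm_le (Q : Matrix V V ℝ) (hoff : ∀ a b, a ≠ b → 0 ≤ Q a b)
    (hrow : ∀ a, ∑ b, Q a b = 0) {v : V → ℝ} {c : ℝ} (h : ∀ a, Q.mulVec v a = c)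
    {x : V} (hx : ∀ b, v b ≤ v x) : c ≤ 0 := by
  have := qm_sum Q hrow v x
  rw [h x] at this
  rw [this]
  apply Finset.sum_nonpos
  intro b _
  rcases eq_or_ne b x with rfl | hbx
  · simp
  · exact mul_nonpos_of_nonneg_of_nonpos (hoff x b (Ne.symm hbx)) (by linarith [hx b])

private lemma qm_prop (Q : Matrix V V ℝ) (hoff : ∀ a b, a ≠ b → 0 ≤ Q a b)
    (hrow : ∀ a, ∑ b, Q a b = 0) {v : V → ℝ} (h : Q.mulVec v = 0)
    {x : V} (hx : ∀ b, v b ≤ v x) {b : V} (hb : 0 < Q x b) : v b = v x := by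
  have h0 : ∑ b, Q x b * (v b - v x) = 0 := by
    rw [← qm_sum Q hrow v x, h]; rfl
  have hterm : ∀ b ∈ Finset.univ, Q x b * (v b - v x) ≤ 0 := by
    intro b _
    rcases eq_or_ne b x with rfl | hbx
    · simp
    · exact mul_nonpos_of_nonneg_of_nonpos (hoff x b (Ne.symm hbx)) (by linarith [hx b])
  have := (Finset.sum_eq_zero_iff_of_nonpos hterm).mp h0 b (Finset.mem_univ b)
  rcases mul_eq_zero.mp this with h1 | h1
  · exact absurd h1 hb.ne'
  · linarith

private lemma qm_const (Q : Matrix V V ℝ) (hoff : ∀ a b, a ≠ b → 0 ≤ Q a b)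
    (hrow : ∀ a, ∑ b, Q a b = 0) {y : V}
    (hy : ∀ x : V, Relation.ReflTransGen (fun a b => 0 < Q a b) x y)
    {v : V → ℝ} (h : Q.mulVec v = 0) : ∀ x, v x = v y := by
  have : Nonempty V := ⟨y⟩
  have key : ∀ (w : V → ℝ), Q.mulVec w = 0 → ∀ x₀, (∀ b, w b ≤ w x₀) → w y = w x₀ := by
    intro w hw x₀ hx₀
    have : ∀ {a b : V}, Relation.ReflTransGen (fun a b => 0 < Q a b) a b →
        w a = w x₀ → w b = w x₀ := by
      intro a b hab
      induction hab with
      | refl => exact id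
      | tail h1 h2 ih =>
        intro ha
        have hmax : ∀ z, w z ≤ w _ := fun z => (ih ha) ▸ hx₀ z
        exact (qm_prop Q hoff hrow hw hmax h2).trans (ih ha)
    exact this (hy x₀) rfl
  obtain ⟨x₀, hx₀⟩ := Finite.exists_max v
  obtain ⟨x₁, hx₁⟩ := Finite.exists_max (fun a => -v a)
  have hmax := key v h x₀ hx₀
  have hneg : Q.mulVec (-v) = 0 := by rw [Matrix.mulVec_neg, h, neg_zero]
  have hmin := key (-v) hneg x₁ hx₁
  intro x
  have h1 : v x ≤ v x₀ := hx₀ x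
  have h2 : -v x ≤ -v x₁ := hx₁ x
  simp only [Pi.neg_apply, neg_inj] at hmin
  have h3 : v x₁ ≤ v x := by linarith
  linarith [hmax, hmin]

private lemma qm_zero (Q : Matrix V V ℝ) [Nonempty V] (hoff : ∀ a b, a ≠ b → 0 ≤ Q a b)
    (hrow : ∀ a, ∑ b, Q a b = 0) {v : V → ℝ} {c : ℝ} (h : ∀ a, Q.mulVec v a = c) : c = 0 := by
  obtain ⟨x₀, hx₀⟩ := Finite.exists_max v
  obtain ⟨x₁, hx₁⟩ := Finite.exists_max (fun a => -v a)
  have h1 : c ≤ 0 := qm_le Q hoff hrow h hx₀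
  have hneg : ∀ a, Q.mulVec (-v) a = -c := by
    intro a; rw [Matrix.mulVec_neg]; simp [h a]
  have h2 : -c ≤ 0 := qm_le Q hoff hrow hneg hx₁
  linarith

private lemma qm_re (Q : Matrix V V ℝ) (v : V → ℂ) (x : V) :
    ((Q.map Complex.ofReal).mulVec v x).re = Q.mulVec (fun b => (v b).re) x := by
  simp [Matrix.mulVec, dotProduct, Complex.re_sum, Complex.mul_re]

private lemma qm_im (Q : Matrix V V ℝ) (v : V → ℂ) (x : V) :
    ((Q.map Complex.ofReal).mulVec v x).im = Q.mulVec (fun b => (v b).im) x := by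
  simp [Matrix.mulVec, dotProduct, Complex.im_sum, Complex.mul_im]

private lemma qm_cconst (Q : Matrix V V ℝ) (hoff : ∀ a b, a ≠ b → 0 ≤ Q a b)
    (hrow : ∀ a, ∑ b, Q a b = 0) {y : V}
    (hy : ∀ x : V, Relation.ReflTransGen (fun a b => 0 < Q a b) x y)
    {v : V → ℂ} (h : (Q.map Complex.ofReal).mulVec v = 0) : ∀ x, v x = v y := by
  have hre : Q.mulVec (fun b => (v b).re) = 0 := by
    funext a
    rw [← qm_re Q v a, h]; rfl
  have him : Q.mulVec (fun b => (v b).im) = 0 := by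
    funext a
    rw [← qm_im Q v a, h]; rfl
  intro x
  have h1 := qm_const Q hoff hrow hy hre x
  have h2 := qm_const Q hoff hrow hy him x
  exact Complex.ext h1 h2

private lemma qm_cker2 (Q : Matrix V V ℝ) (hoff : ∀ a b, a ≠ b → 0 ≤ Q a b)
    (hrow : ∀ a, ∑ b, Q a b = 0) {y : V}
    (hy : ∀ x : V, Relation.ReflTransGen (fun a b => 0 < Q a b) x y)
    {w : V → ℂ} (h : (Q.map Complex.ofReal).mulVec ((Q.map Complex.ofReal).mulVec w) = 0) :
    (Q.map Complex.ofReal).mulVec w = 0 := by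
  have : Nonempty V := ⟨y⟩
  set u := (Q.map Complex.ofReal).mulVec w with hu
  have hconst : ∀ x, u x = u y := qm_cconst Q hoff hrow hy h
  have hre : ∀ a, Q.mulVec (fun b => (w b).re) a = (u y).re := by
    intro a
    rw [← qm_re Q w a, ← hu, hconst a]
  have him : ∀ a, Q.mulVec (fun b => (w b).im) a = (u y).im := by
    intro a
    rw [← qm_im Q w a, ← hu, hconst a]
  have h1 : (u y).re = 0 := qm_zero Q hoff hrow hre
  have h2 : (u y).im = 0 := qm_zero Q hoff hrow him
  funext x
  show u x = (0 : V → ℂ) x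
  rw [hconst x, Pi.zero_apply]
  exact Complex.ext h1 h2

private lemma eig_of_charpoly_root {n : Type*} [Fintype n] [DecidableEq n]
    (B : Matrix n n ℂ) {μ : ℂ} (h : B.charpoly.IsRoot μ) :
    Module.End.HasEigenvalue (Matrix.toLin' B) μ := by
  have hdet : (Matrix.diagonal (fun _ : n => μ) - B).det = 0 := by
    have := h
    rw [Polynomial.IsRoot, Matrix.charpoly] at this
    rw [show (Polynomial.eval μ (Matrix.charmatrix B).det) =
        ((Matrix.charmatrix B).map (Polynomial.evalRingHom μ)).det from
      RingHom.map_det (Polynomial.evalRingHom μ) _ ] at this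
    convert this using 2
    ext i j
    rcases eq_or_ne i j with rfl | hij
    · simp [Matrix.charmatrix_apply_eq]
    · simp [Matrix.charmatrix_apply_ne _ _ _ hij, Matrix.diagonal_apply_ne _ hij]
  obtain ⟨v, hv, hv0⟩ := (Matrix.exists_mulVec_eq_zero_iff).mpr hdet
  have heig : B.mulVec v = μ • v := by
    have := hv0
    rw [Matrix.sub_mulVec] at this
    have hd : (Matrix.diagonal (fun _ : n => μ)).mulVec v = μ • v := by
      funext i; simp [Matrix.mulVec_diagonal]
    rw [hd] at this
    funext i
    have := congrFun this i
    simp only [Pi.sub_apply, Pi.zero_apply, sub_eq_zero] at this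
    exact this.symm
  apply Module.End.hasEigenvalue_of_hasEigenvector (x := v)
  refine ⟨Module.End.mem_eigenspace_iff.mpr ?_, hv⟩
  rw [Matrix.toLin'_apply, heig]

private lemma re_nonneg_of_root {V : Type*} [Fintype V] [DecidableEq V] (Q : Matrix V V ℝ)
    (hoff : ∀ a b, a ≠ b → 0 ≤ Q a b) (hrow : ∀ a, ∑ b, Q a b = 0)
    {μ : ℂ} (h : (Matrix.charpoly ((-Q).map (Complex.ofReal))).IsRoot μ) : 0 ≤ μ.re := by
  set B := (-Q).map (Complex.ofReal) with hB
  have heig := eig_of_charpoly_root B h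
  obtain ⟨k, hk⟩ := eigenvalue_mem_ball heig
  rw [Metric.mem_closedBall] at hk
  have hnorm : ∀ j, j ≠ k → ‖B k j‖ = Q k j := by
    intro j hj
    simp only [hB, Matrix.map_apply, Matrix.neg_apply, Complex.ofReal_neg]
    rw [norm_neg, Complex.norm_real, Real.norm_eq_abs, abs_of_nonneg (hoff k j ?_)]
    intro hkj; exact hj hkj.symm
  have hr : ∑ j ∈ Finset.univ.erase k, ‖B k j‖ = -Q k k := by
    rw [Finset.sum_congr rfl (fun j hj => hnorm j (Finset.ne_of_mem_erase hj))]
    have := hrow k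
    have h2 : ∑ j ∈ Finset.univ.erase k, Q k j = (∑ j, Q k j) - Q k k :=
      Finset.sum_erase_eq_sub (Finset.mem_univ k)
    rw [h2, this, zero_sub]
  have hc : B k k = ((-Q k k : ℝ) : ℂ) := by simp [hB]
  rw [hr, hc] at hk
  have habs : ‖μ - ((-Q k k : ℝ) : ℂ)‖ ≤ -Q k k := by
    rwa [dist_eq_norm] at hk
  have h1 : |(μ - ((-Q k k : ℝ) : ℂ)).re| ≤ -Q k k :=
    le_trans (Complex.abs_re_le_norm _) habs
  have h2 : (μ - ((-Q k k : ℝ) : ℂ)).re = μ.re - (-Q k k) := by simp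
  rw [h2, abs_le] at h1
  linarith [h1.1]

end Aux

/-- Let `Q` be a `Q`-matrix on a finite state space (nonnegative off-diagonal
entries, rows summing to `0`) such that some state is accessible from every state.
Then `0` is a simple eigenvalue of `Q` (its algebraic multiplicity in the
characteristic polynomial over `ℂ` is `1`), every nonzero real eigenvalue of `-Q` is
strictly positive, and every (complex) eigenvalue of `-Q` has nonnegative real
part. -/
theorem stmt19 {V : Type*} [Fintype V] [DecidableEq V] (Q : Matrix V V ℝ)
    (hoff : ∀ a b, a ≠ b → 0 ≤ Q a b) (hrow : ∀ a, ∑ b, Q a b = 0)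
    (hacc : ∃ y : V, ∀ x : V, Relation.ReflTransGen (fun a b => 0 < Q a b) x y) :
    ((Matrix.charpoly (Q.map (Complex.ofReal))).rootMultiplicity 0 = 1) ∧
    (∀ μ : ℝ, (Matrix.charpoly (-Q)).IsRoot μ → μ ≠ 0 → 0 < μ) ∧
    (∀ μ : ℂ, (Matrix.charpoly ((-Q).map (Complex.ofReal))).IsRoot μ → 0 ≤ μ.re) := by
  obtain ⟨y, hy⟩ := hacc
  have : Nonempty V := ⟨y⟩
  set A := Q.map (Complex.ofReal) with hA
  refine ⟨?_, ?_, fun μ h => re_nonneg_of_root Q hoff hrow h⟩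
  · -- multiplicity of 0 is 1
    set φ : Module.End ℂ (V → ℂ) := Matrix.toLin' A with hφ
    have hcp : A.charpoly = LinearMap.charpoly φ := by
      rw [← LinearMap.charpoly_toMatrix φ (Pi.basisFun ℂ V), LinearMap.toMatrix_eq_toMatrix',
        hφ, LinearMap.toMatrix'_toLin']
    rw [Polynomial.rootMultiplicity_eq_natTrailingDegree', hcp,
      ← LinearMap.finrank_maxGenEigenspace_zero_eq]
    -- the generalized eigenspace at 0 is the span of the constant vector 1
    have hone : A.mulVec (fun _ => (1 : ℂ)) = 0 := by
      funext a
      simp only [Matrix.mulVec, dotProduct, mul_one, hA, Matrix.map_apply]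
      rw [← Complex.ofReal_sum, hrow a, Complex.ofReal_zero]
      simp
    have hker_step : ∀ (k : ℕ) (v : V → ℂ), (φ ^ k) v = 0 → φ v = 0 := by
      intro k
      induction k with
      | zero =>
        intro v hv
        simp only [pow_zero, Module.End.one_apply] at hv
        rw [hv, map_zero]
      | succ k ih =>
        intro v hv
        rw [pow_succ, Module.End.mul_apply] at hv
        have h2 := ih (φ v) hv
        have : A.mulVec (A.mulVec v) = 0 := by
          have e1 : φ v = A.mulVec v := Matrix.toLin'_apply A v
          have e2 : φ (φ v) = A.mulVec (A.mulVec v) := by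
            rw [e1]; exact Matrix.toLin'_apply A _
          rw [← e2]; exact h2
        have := qm_cker2 Q hoff hrow hy this
        rw [Matrix.toLin'_apply]; exact this
    have hspan : φ.maxGenEigenspace 0 = Submodule.span ℂ {(fun _ => (1 : ℂ) : V → ℂ)} := by
      apply le_antisymm
      · intro v hv
        rw [Module.End.mem_maxGenEigenspace] at hv
        obtain ⟨k, hk⟩ := hv
        simp only [zero_smul, sub_zero] at hk
        have hφv : φ v = 0 := hker_step k v hk
        have hAv : A.mulVec v = 0 := by rw [← Matrix.toLin'_apply A v]; exact hφv
        have hconst := qm_cconst Q hoff hrow hy hAv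
        rw [Submodule.mem_span_singleton]
        exact ⟨v y, by funext x; simp [hconst x]⟩
      · rw [Submodule.span_le, Set.singleton_subset_iff]
        rw [SetLike.mem_coe, Module.End.mem_maxGenEigenspace]
        exact ⟨1, by simp only [zero_smul, sub_zero, pow_one]; rw [Matrix.toLin'_apply]; exact hone⟩
    rw [hspan]
    have hne : (fun _ => (1 : ℂ) : V → ℂ) ≠ 0 := by
      intro hcontra
      have := congrFun hcontra y
      simp at this
    exact finrank_span_singleton hne
  · -- real eigenvalues of -Q
    intro μ hμ hne
    have hroot : (Matrix.charpoly ((-Q).map (Complex.ofReal))).IsRoot ((μ : ℝ) : ℂ) := by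
      have : ((-Q).map (Complex.ofReal)) = ((-Q).map (Complex.ofRealHom : ℝ →+* ℂ)) := rfl
      rw [this, Matrix.charpoly_map]
      exact hμ.map
    have h0 := re_nonneg_of_root Q hoff hrow hroot
    rw [Complex.ofReal_re] at h0
    exact lt_of_le_of_ne h0 (Ne.symm hne)
end
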